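/- Let γ > 0 and M ∈ ℕ, and let (a_{nm})_{n,m ∈ ℕ} be real numbers with |a_{nm}| ≤ S for all n,m and |a_{nm}| ≤ 2^{-γ|m-n|} S whenever |m−n| ≥ M+1, where S ≥ 0. If moreover Σ_{n,m=1}^{N} a_{nm} = 2N·D + o(N) as N → ∞ for some D ≥ 0, then D ≤ S·(M + 1/(2^γ − 1) + 1/2) ; in particular S ≥ c D for some constant c > 0 depending only on γ and M. -/

import Mathlib

open Filter Finset

lemma geo_bound (r : ℝ) (h0 : 0 ≤ r) (h1 : r < 1) (s : Finset ℕ) (hs : ∀ j ∈ s, 1 ≤ j) :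
    ∑ j ∈ s, r ^ j ≤ r / (1 - r) := by
  have hsummable : Summable (fun k : ℕ => r * r ^ k) :=
    (summable_geometric_of_lt_one h0 h1).mul_left r
  have h2 : ∑ j ∈ s, r ^ j = ∑ k ∈ s.image (· - 1), r * r ^ k := by
    rw [Finset.sum_image]
    · refine Finset.sum_congr rfl fun j hj => ?_
      have := hs j hj
      rw [← pow_succ']
      congr 1
      omega
    · intro x hx y hy h
      have := hs x hx; have := hs y hy; simp only at h; omega
  rw [h2]
  calc ∑ k ∈ s.image (· - 1), r * r ^ k ≤ ∑' k : ℕ, r * r ^ k :=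
        Summable.sum_le_tsum _ (fun k _ => by positivity) hsummable
    _ = r * (1 - r)⁻¹ := by rw [tsum_mul_left, tsum_geometric_of_lt_one h0 h1]
    _ = r / (1 - r) := by rw [div_eq_mul_inv]

lemma nat_dist_cast (n m : ℕ) : (Nat.dist n m : ℝ) = |(m : ℝ) - (n : ℝ)| := by
  rcases le_total n m with h | h
  · have hnn : (0:ℝ) ≤ (m:ℝ) - (n:ℝ) := sub_nonneg.2 (by exact_mod_cast h)
    rw [Nat.dist_eq_sub_of_le h, abs_of_nonneg hnn]
    push_cast [h]; ring
  · have hnp : (m:ℝ) - (n:ℝ) ≤ 0 := sub_nonpos.2 (by exact_mod_cast h)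
    rw [Nat.dist_eq_sub_of_le_right h, abs_of_nonpos hnp]
    push_cast [h]; ring

theorem stmt3 (γ : ℝ) (hγ : 0 < γ) (M : ℕ) (a : ℕ → ℕ → ℝ) (S D : ℝ)
    (hS : 0 ≤ S) (hD : 0 ≤ D)
    (hbd : ∀ n m, |a n m| ≤ S)
    (hdecay : ∀ n m : ℕ, (M : ℝ) + 1 ≤ |(m : ℝ) - (n : ℝ)| →
      |a n m| ≤ (2 : ℝ) ^ (-γ * |(m : ℝ) - (n : ℝ)|) * S)
    (hsum : (fun N : ℕ => (∑ n ∈ Finset.Icc 1 N, ∑ m ∈ Finset.Icc 1 N, a n m) - 2 * N * D)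
      =o[atTop] fun N : ℕ => (N : ℝ)) :
    D ≤ S * ((M : ℝ) + 1 / ((2 : ℝ) ^ γ - 1) + 1/2) := by
  set r : ℝ := (2 : ℝ) ^ (-γ) with hr
  have hr0 : 0 < r := Real.rpow_pos_of_pos (by norm_num) _
  have ht1 : (1 : ℝ) < (2:ℝ) ^ γ :=
    (Real.one_lt_rpow_iff_of_pos (by norm_num)).2 (Or.inl ⟨by norm_num, hγ⟩)
  have hr1 : r < 1 := by
    rw [hr]
    exact Real.rpow_lt_one_of_one_lt_of_neg (by norm_num) (by linarith)
  have hreq : r = ((2:ℝ)^γ)⁻¹ := by rw [hr, Real.rpow_neg (by norm_num : (0:ℝ) ≤ 2)]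
  have ht0 : (0:ℝ) < (2:ℝ)^γ := by linarith
  have hid : r / (1 - r) = 1 / ((2:ℝ)^γ - 1) := by
    rw [hreq]
    have h1 : (2:ℝ)^γ - 1 ≠ 0 := by linarith
    have h2 : (2:ℝ)^γ ≠ 0 := ne_of_gt ht0
    field_simp
  set C : ℝ := S * ((M : ℝ) + 1 / ((2 : ℝ) ^ γ - 1) + 1/2) with hC
  -- entrywise bound
  have hentry : ∀ n m : ℕ, |a n m| ≤ if Nat.dist n m ≤ M then S else S * r ^ (Nat.dist n m) := by
    intro n m
    split_ifs with h
    · exact hbd n m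
    · have hd : (M : ℝ) + 1 ≤ |(m : ℝ) - (n : ℝ)| := by
        rw [← nat_dist_cast]
        exact_mod_cast Nat.succ_le_of_lt (Nat.lt_of_not_le h)
      have hthis := hdecay n m hd
      rw [← nat_dist_cast] at hthis
      have hpow : r ^ (Nat.dist n m) = (2:ℝ) ^ (-γ * (Nat.dist n m : ℝ)) := by
        rw [← Real.rpow_natCast r (Nat.dist n m), hr,
          ← Real.rpow_mul (by norm_num : (0:ℝ) ≤ 2)]
      calc |a n m| ≤ (2:ℝ) ^ (-γ * (Nat.dist n m : ℝ)) * S := hthis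
        _ = S * r ^ (Nat.dist n m) := by rw [hpow]; ring
  -- row bound
  have hrow : ∀ N n : ℕ, ∑ m ∈ Finset.Icc 1 N, |a n m| ≤ S * (2*M+1) + 2 * (S * (r/(1-r))) := by
    intro N n
    calc ∑ m ∈ Finset.Icc 1 N, |a n m|
        ≤ ∑ m ∈ Finset.Icc 1 N, (if Nat.dist n m ≤ M then S else S * r ^ (Nat.dist n m)) :=
          Finset.sum_le_sum fun m _ => hentry n m
      _ ≤ S * (2*M+1) + 2 * (S * (r/(1-r))) := ?_
    rw [← Finset.sum_filter_add_sum_filter_not (Finset.Icc 1 N) (fun m => Nat.dist n m ≤ M)]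
    have h1 : ∑ m ∈ (Finset.Icc 1 N).filter (fun m => Nat.dist n m ≤ M),
        (if Nat.dist n m ≤ M then S else S * r ^ (Nat.dist n m)) ≤ S * (2*M+1) := by
      rw [Finset.sum_congr rfl (fun m hm => if_pos (Finset.mem_filter.1 hm).2)]
      have hcard : ((Finset.Icc 1 N).filter (fun m => Nat.dist n m ≤ M)).card ≤ 2*M+1 := by
        have hsub : (Finset.Icc 1 N).filter (fun m => Nat.dist n m ≤ M) ⊆ Finset.Icc (n - M) (n + M) := by
          intro m hm
          have := (Finset.mem_filter.1 hm).2
          simp only [Finset.mem_Icc]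
          unfold Nat.dist at this
          omega
        calc _ ≤ (Finset.Icc (n-M) (n+M)).card := Finset.card_le_card hsub
          _ ≤ 2*M+1 := by rw [Nat.card_Icc]; omega
      calc ∑ _m ∈ (Finset.Icc 1 N).filter (fun m => Nat.dist n m ≤ M), S
          = ((Finset.Icc 1 N).filter (fun m => Nat.dist n m ≤ M)).card * S := by
            rw [Finset.sum_const, nsmul_eq_mul]
        _ ≤ ((2*M+1 : ℕ) : ℝ) * S := by
            apply mul_le_mul_of_nonneg_right _ hS
            exact_mod_cast hcard
        _ = S * (2*M+1) := by push_cast; ring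
    have h2 : ∑ m ∈ (Finset.Icc 1 N).filter (fun m => ¬ Nat.dist n m ≤ M),
        (if Nat.dist n m ≤ M then S else S * r ^ (Nat.dist n m)) ≤ 2 * (S * (r/(1-r))) := by
      rw [Finset.sum_congr rfl (fun m hm => if_neg (Finset.mem_filter.1 hm).2)]
      set T := (Finset.Icc 1 N).filter (fun m => ¬ Nat.dist n m ≤ M) with hT
      have hsplit : T ⊆ T.filter (· < n) ∪ T.filter (n < ·) := by
        intro m hm
        have hne : m ≠ n := by
          have := (Finset.mem_filter.1 hm).2
          unfold Nat.dist at this; omega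
        rcases lt_or_gt_of_ne hne with h | h
        · exact Finset.mem_union_left _ (Finset.mem_filter.2 ⟨hm, h⟩)
        · exact Finset.mem_union_right _ (Finset.mem_filter.2 ⟨hm, h⟩)
      have hdisj : Disjoint (T.filter (· < n)) (T.filter (n < ·)) := by
        rw [Finset.disjoint_left]
        intro m h1 h2
        have := (Finset.mem_filter.1 h1).2
        have := (Finset.mem_filter.1 h2).2
        omega
      have hA : ∑ m ∈ T.filter (· < n), S * r ^ (Nat.dist n m) ≤ S * (r/(1-r)) := by
        rw [← Finset.mul_sum]
        apply mul_le_mul_of_nonneg_left _ hS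
        have him : ∑ m ∈ T.filter (· < n), r ^ (Nat.dist n m)
            = ∑ k ∈ (T.filter (· < n)).image (fun m => n - m), r ^ k := by
          rw [Finset.sum_image]
          · exact Finset.sum_congr rfl fun m hm => by
              have hm' := (Finset.mem_filter.1 hm).2
              congr 1
              unfold Nat.dist; omega
          · intro x hx y hy h
            have := (Finset.mem_filter.1 hx).2
            have := (Finset.mem_filter.1 hy).2
            simp only at h
            omega
        rw [him]
        apply geo_bound r hr0.le hr1
        intro j hj
        obtain ⟨m, hm, rfl⟩ := Finset.mem_image.1 hj
        have := (Finset.mem_filter.1 hm).2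
        omega
      have hB : ∑ m ∈ T.filter (n < ·), S * r ^ (Nat.dist n m) ≤ S * (r/(1-r)) := by
        rw [← Finset.mul_sum]
        apply mul_le_mul_of_nonneg_left _ hS
        have him : ∑ m ∈ T.filter (n < ·), r ^ (Nat.dist n m)
            = ∑ k ∈ (T.filter (n < ·)).image (fun m => m - n), r ^ k := by
          rw [Finset.sum_image]
          · exact Finset.sum_congr rfl fun m hm => by
              have hm' := (Finset.mem_filter.1 hm).2
              congr 1
              unfold Nat.dist; omega
          · intro x hx y hy h
            have := (Finset.mem_filter.1 hx).2
            have := (Finset.mem_filter.1 hy).2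
            simp only at h
            omega
        rw [him]
        apply geo_bound r hr0.le hr1
        intro j hj
        obtain ⟨m, hm, rfl⟩ := Finset.mem_image.1 hj
        have := (Finset.mem_filter.1 hm).2
        omega
      calc ∑ m ∈ T, S * r ^ (Nat.dist n m)
          ≤ ∑ m ∈ T.filter (· < n) ∪ T.filter (n < ·), S * r ^ (Nat.dist n m) :=
            Finset.sum_le_sum_of_subset_of_nonneg hsplit (fun m _ _ => by positivity)
        _ = ∑ m ∈ T.filter (· < n), S * r ^ (Nat.dist n m)
            + ∑ m ∈ T.filter (n < ·), S * r ^ (Nat.dist n m) := Finset.sum_union hdisj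
        _ ≤ 2 * (S * (r/(1-r))) := by linarith
    linarith
  -- total bound
  have htot : ∀ N : ℕ, ∑ n ∈ Finset.Icc 1 N, ∑ m ∈ Finset.Icc 1 N, a n m ≤ 2 * N * C := by
    intro N
    have h1 : ∑ n ∈ Finset.Icc 1 N, ∑ m ∈ Finset.Icc 1 N, a n m
        ≤ ∑ n ∈ Finset.Icc 1 N, ∑ m ∈ Finset.Icc 1 N, |a n m| :=
      Finset.sum_le_sum fun n _ => Finset.sum_le_sum fun m _ => le_abs_self _
    have h2 : ∑ n ∈ Finset.Icc 1 N, ∑ m ∈ Finset.Icc 1 N, |a n m|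
        ≤ ∑ _n ∈ Finset.Icc 1 N, (S * (2*M+1) + 2 * (S * (r/(1-r)))) :=
      Finset.sum_le_sum fun n _ => hrow N n
    have hc : S * (2*M+1) + 2 * (S * (r/(1-r))) = 2 * C := by
      rw [hC, hid]; ring
    have h3 : ∑ _n ∈ Finset.Icc 1 N, (S * (2*M+1) + 2 * (S * (r/(1-r)))) = 2 * N * C := by
      rw [Finset.sum_const, Nat.card_Icc, nsmul_eq_mul, hc, Nat.add_sub_cancel]
      ring
    linarith
  -- limit argument
  by_contra hcon
  push_neg at hcon
  have hε : 0 < D - C := by rw [hC]; linarith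
  have h2 := hsum.def hε
  obtain ⟨N, hN2, hN1⟩ := (h2.and (eventually_ge_atTop 1)).exists
  have hNpos : (1:ℝ) ≤ (N:ℝ) := by exact_mod_cast hN1
  simp only [Real.norm_eq_abs, Nat.abs_cast] at hN2
  have htotN := htot N
  have habs := (neg_le_abs ((∑ n ∈ Finset.Icc 1 N, ∑ m ∈ Finset.Icc 1 N, a n m)
      - 2 * N * D)).trans hN2
  nlinarith [mul_le_mul_of_nonneg_left hNpos hε.le]
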